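/- (Erdős) The vertices of an infinite Cartesian Erdős graph are situated on a straight line: if S is an infinite set of points of the Euclidean plane ℝ² such that the distance between any two points of S is an integer, then all points of S are collinear. -/

import Mathlib

open RealInnerProductSpace Polynomial

local notation "V" => EuclideanSpace ℝ (Fin 2)

lemma quad_finite (A B C : ℝ) (h : ¬(A = 0 ∧ B = 0 ∧ C = 0)) :
    {t : ℝ | A * t ^ 2 + B * t + C = 0}.Finite := by
  have hp : (Polynomial.C A * X ^ 2 + Polynomial.C B * X + Polynomial.C C : ℝ[X]) ≠ 0 := by
    intro hz
    apply h
    refine ⟨?_, ?_, ?_⟩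
    · have := congrArg (fun p => Polynomial.coeff p 2) hz
      simpa [coeff_add, coeff_C_mul, coeff_X_pow, coeff_C] using this
    · have := congrArg (fun p => Polynomial.coeff p 1) hz
      simpa [coeff_add, coeff_C_mul, coeff_X_pow, coeff_C] using this
    · have := congrArg (fun p => Polynomial.coeff p 0) hz
      simpa [coeff_add, coeff_C_mul, coeff_X_pow, coeff_C] using this
  refine (Polynomial.finite_setOf_isRoot hp).subset ?_
  intro t ht
  simp only [Set.mem_setOf_eq, IsRoot, eval_add, eval_mul, eval_pow, eval_C, eval_X]
  simpa using ht

lemma dep_of_inner_sq {p w : V} (hw : w ≠ 0) (h : ⟪p, w⟫ ^ 2 = ‖p‖ ^ 2 * ‖w‖ ^ 2) :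
    ∃ t : ℝ, p = t • w := by
  have hw2 : ‖w‖ ^ 2 ≠ 0 := pow_ne_zero _ (norm_ne_zero_iff.2 hw)
  refine ⟨⟪p, w⟫ / ‖w‖ ^ 2, ?_⟩
  have hz : ‖p - (⟪p, w⟫ / ‖w‖ ^ 2) • w‖ ^ 2 = 0 := by
    rw [norm_sub_sq_real, real_inner_smul_right, norm_smul, mul_pow, Real.norm_eq_abs, sq_abs]
    generalize hA : ⟪p, w⟫ = A at h ⊢
    field_simp
    linear_combination (-1 : ℝ) * h
  have h1 : p - (⟪p, w⟫ / ‖w‖ ^ 2) • w = 0 :=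
    norm_eq_zero.1 (pow_eq_zero_iff (n := 2) (by norm_num) |>.1 hz)
  exact sub_eq_zero.1 h1

lemma norm_line_expand (p w : V) (t : ℝ) :
    ‖p + t • w‖ ^ 2 = ‖p‖ ^ 2 + 2 * t * ⟪p, w⟫ + t ^ 2 * ‖w‖ ^ 2 := by
  rw [norm_add_sq_real, real_inner_smul_right, norm_smul, mul_pow, Real.norm_eq_abs, sq_abs]
  ring

/-- On a line not through the origin, an equation `2r‖x‖ = linear` (r ≠ 0)
    has finitely many solutions. -/
lemma line_param_finite (p w : V) (r α γ : ℝ) (hr : r ≠ 0) (hw : w ≠ 0)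
    (h0 : ∀ t : ℝ, p + t • w ≠ 0) :
    {t : ℝ | 2 * r * ‖p + t • w‖ = α * t + γ}.Finite := by
  set A := 4 * r ^ 2 * ‖w‖ ^ 2 - α ^ 2 with hA
  set B := 8 * r ^ 2 * ⟪p, w⟫ - 2 * α * γ with hB
  set C := 4 * r ^ 2 * ‖p‖ ^ 2 - γ ^ 2 with hC
  have hsub : {t : ℝ | 2 * r * ‖p + t • w‖ = α * t + γ} ⊆
      {t : ℝ | A * t ^ 2 + B * t + C = 0} := by
    intro t ht
    simp only [Set.mem_setOf_eq] at ht ⊢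
    have hsq : (2 * r * ‖p + t • w‖) ^ 2 = (α * t + γ) ^ 2 := by rw [ht]
    have hexp := norm_line_expand p w t
    rw [mul_pow, mul_pow, hexp] at hsq
    rw [hA, hB, hC]; nlinarith [hsq]
  refine (quad_finite A B C ?_).subset hsub
  rintro ⟨hA0, hB0, hC0⟩
  have hr2 : (4 : ℝ) * r ^ 2 ≠ 0 := by positivity
  have hinner : ⟪p, w⟫ ^ 2 = ‖p‖ ^ 2 * ‖w‖ ^ 2 := by
    have e1 : α ^ 2 = 4 * r ^ 2 * ‖w‖ ^ 2 := by rw [hA] at hA0; linarith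
    have e2 : γ ^ 2 = 4 * r ^ 2 * ‖p‖ ^ 2 := by rw [hC] at hC0; linarith
    have e3 : 8 * r ^ 2 * ⟪p, w⟫ = 2 * α * γ := by rw [hB] at hB0; linarith
    have e4 : (8 * r ^ 2 * ⟪p, w⟫) ^ 2 = (2 * α * γ) ^ 2 := by rw [e3]
    have hr4 : (64 : ℝ) * r ^ 4 ≠ 0 := by positivity
    have e5 : 64 * r ^ 4 * ⟪p, w⟫ ^ 2 = 64 * r ^ 4 * (‖p‖ ^ 2 * ‖w‖ ^ 2) := by
      nlinarith [e4, e1, e2]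
    exact mul_left_cancel₀ hr4 e5
  obtain ⟨s, hs⟩ := dep_of_inner_sq hw hinner
  exact h0 (-s) (by rw [hs]; simp)

lemma inner_two (x y : V) : ⟪x, y⟫ = x 0 * y 0 + x 1 * y 1 := by
  simp [PiLp.inner_apply, Fin.sum_univ_two, RCLike.inner_apply, mul_comm]

noncomputable def rot (d : V) : V :=
  (WithLp.equiv 2 (Fin 2 → ℝ)).symm ![-(d 1), d 0]

lemma rot_apply0 (d : V) : rot d 0 = -(d 1) := rfl
lemma rot_apply1 (d : V) : rot d 1 = d 0 := rfl

lemma rot_inner (d : V) : ⟪rot d, d⟫ = 0 := by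
  rw [inner_two, rot_apply0, rot_apply1]; ring

lemma norm_sq_two (x : V) : ‖x‖ ^ 2 = x 0 ^ 2 + x 1 ^ 2 := by
  rw [← real_inner_self_eq_norm_sq, inner_two]; ring

lemma rot_ne_zero {d : V} (hd : d ≠ 0) : rot d ≠ 0 := by
  intro h
  apply hd
  have h0 : rot d 0 = 0 := by rw [h]; rfl
  have h1 : rot d 1 = 0 := by rw [h]; rfl
  rw [rot_apply0] at h0; rw [rot_apply1] at h1
  ext i
  fin_cases i
  · simpa using h1
  · simpa using (neg_eq_zero.1 h0)

/-- A vector orthogonal to `d ≠ 0` is a multiple of `rot d`. -/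
lemma exists_smul_rot {d y : V} (hd : d ≠ 0) (hy : ⟪y, d⟫ = 0) :
    ∃ t : ℝ, y = t • rot d := by
  apply dep_of_inner_sq (rot_ne_zero hd)
  have hL : ⟪y, rot d⟫ ^ 2 + ⟪y, d⟫ ^ 2 = ‖y‖ ^ 2 * ‖d‖ ^ 2 := by
    rw [inner_two, inner_two, rot_apply0, rot_apply1, norm_sq_two, norm_sq_two]; ring
  have hr : ‖rot d‖ ^ 2 = ‖d‖ ^ 2 := by
    rw [norm_sq_two, norm_sq_two, rot_apply0, rot_apply1]; ring
  rw [hy] at hL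
  rw [hr]
  linarith

/-- Two independent vectors in the plane: a vector orthogonal to both is zero. -/
lemma perp_two {b c x : V} (Hind : ∀ s t : ℝ, s • b + t • c = 0 → s = 0 ∧ t = 0)
    (hxb : ⟪x, b⟫ = 0) (hxc : ⟪x, c⟫ = 0) : x = 0 := by
  have hb : b ≠ 0 := by
    intro h
    have := Hind 1 0 (by simp [h])
    exact one_ne_zero this.1
  obtain ⟨t, ht⟩ := exists_smul_rot hb hxb
  rcases eq_or_ne t 0 with rfl | ht0
  · simpa using ht
  · exfalso
    have hcb : ⟪c, rot b⟫ = 0 := by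
      have : ⟪x, c⟫ = t * ⟪rot b, c⟫ := by rw [ht, real_inner_smul_left]
      rw [hxc] at this
      have h2 : ⟪rot b, c⟫ = 0 := by
        rcases mul_eq_zero.1 this.symm with h | h
        · exact absurd h ht0
        · exact h
      rw [real_inner_comm]; exact h2
    obtain ⟨s, hs⟩ := exists_smul_rot (rot_ne_zero hb) hcb
    have hrr : rot (rot b) = -b := by
      ext i
      fin_cases i
      · show rot (rot b) 0 = -(b 0)
        rw [rot_apply0, rot_apply1]
      · show rot (rot b) 1 = -(b 1)
        rw [rot_apply1, rot_apply0]
    rw [hrr] at hs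
    have : s • b + (1:ℝ) • c = 0 := by
      rw [hs]; simp
    exact one_ne_zero (Hind s 1 this).2

def Qset (b : V) (k : ℝ) : Set (EuclideanSpace ℝ (Fin 2)) :=
  {x | 2 * k * ‖x‖ = 2 * ⟪x, b⟫ - ‖b‖ ^ 2 + k ^ 2}

section
variable {b c : V}

lemma hb_ne (Hind : ∀ s t : ℝ, s • b + t • c = 0 → s = 0 ∧ t = 0) : b ≠ 0 := by
  intro h
  exact one_ne_zero (Hind 1 0 (by simp [h])).1

lemma notpar (Hind : ∀ s t : ℝ, s • b + t • c = 0 → s = 0 ∧ t = 0) :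
    ⟪b, c⟫ ^ 2 ≠ ‖b‖ ^ 2 * ‖c‖ ^ 2 := by
  intro h
  have h2 : ⟪c, b⟫ ^ 2 = ‖c‖ ^ 2 * ‖b‖ ^ 2 := by rw [real_inner_comm]; linarith
  obtain ⟨s, hs⟩ := dep_of_inner_sq (hb_ne Hind) h2
  have : s • b + (-1 : ℝ) • c = 0 := by rw [hs]; simp
  have := (Hind s (-1) this).2
  norm_num at this

/-- Degenerate case: `k² = ‖b‖²`, so `Qset b k` lies on the line through `0` and `b`. -/
lemma caseA (Hind : ∀ s t : ℝ, s • b + t • c = 0 → s = 0 ∧ t = 0) {k m : ℝ} (hkb : k ^ 2 = ‖b‖ ^ 2) : (Qset b k ∩ Qset c m).Finite := by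
  classical
  set T : Set ℝ := {t | 2 * m * (|t| * ‖b‖) = 2 * (t * ⟪b, c⟫) - ‖c‖ ^ 2 + m ^ 2} with hT
  have himg : Qset b k ∩ Qset c m ⊆ (fun t : ℝ => t • b) '' T := by
    rintro x ⟨hx1, hx2⟩
    have hx1' : k * ‖x‖ = ⟪x, b⟫ := by
      simp only [Qset, Set.mem_setOf_eq] at hx1; linarith
    have hsq : ⟪x, b⟫ ^ 2 = ‖x‖ ^ 2 * ‖b‖ ^ 2 := by
      rw [← hx1']; rw [← hkb]; ring
    obtain ⟨t, ht⟩ := dep_of_inner_sq (hb_ne Hind) hsq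
    refine ⟨t, ?_, ht.symm⟩
    simp only [Qset, Set.mem_setOf_eq] at hx2
    rw [ht, norm_smul, Real.norm_eq_abs, real_inner_smul_left] at hx2
    simpa [hT] using hx2
  refine (Set.Finite.image _ ?_).subset himg
  have hTsub : T ⊆ {t : ℝ | t ∈ T ∧ 0 ≤ t} ∪ {t : ℝ | t ∈ T ∧ t < 0} := by
    intro t ht
    rcases le_or_gt 0 t with h | h
    · exact Or.inl ⟨ht, h⟩
    · exact Or.inr ⟨ht, h⟩
  refine Set.Finite.subset (Set.Finite.union ?_ ?_) hTsub
  · refine (quad_finite 0 (2 * m * ‖b‖ - 2 * ⟪b, c⟫) (‖c‖ ^ 2 - m ^ 2) ?_).subset ?_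
    · rintro ⟨-, hB, hC⟩
      apply notpar Hind
      have h1 : ⟪b, c⟫ = m * ‖b‖ := by linarith
      have h2 : ‖c‖ ^ 2 = m ^ 2 := by linarith
      rw [h1, h2]; ring
    · rintro t ⟨ht, h0t⟩
      simp only [hT, Set.mem_setOf_eq, abs_of_nonneg h0t] at ht
      simp only [Set.mem_setOf_eq]; nlinarith [ht]
  · refine (quad_finite 0 (-(2 * m * ‖b‖) - 2 * ⟪b, c⟫) (‖c‖ ^ 2 - m ^ 2) ?_).subset ?_
    · rintro ⟨-, hB, hC⟩
      apply notpar Hind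
      have h1 : ⟪b, c⟫ = -(m * ‖b‖) := by linarith
      have h2 : ‖c‖ ^ 2 = m ^ 2 := by linarith
      rw [h1, h2]; ring
    · rintro t ⟨ht, h0t⟩
      simp only [hT, Set.mem_setOf_eq, abs_of_neg h0t] at ht
      simp only [Set.mem_setOf_eq]; nlinarith [ht]

/-- Main nondegenerate case: `k ≠ 0` and `k² ≠ ‖b‖²`. -/
lemma caseB2k (Hind : ∀ s t : ℝ, s • b + t • c = 0 → s = 0 ∧ t = 0) {k m : ℝ} (hk0 : k ≠ 0) (hkb : k ^ 2 ≠ ‖b‖ ^ 2) :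
    (Qset b k ∩ Qset c m).Finite := by
  classical
  set d : V := m • b - k • c with hd_def
  clear_value d
  have hd : d ≠ 0 := by
    intro h
    have : m • b + (-k) • c = 0 := by
      rw [hd_def] at h; rw [← h]; module
    exact hk0 (neg_eq_zero.1 (Hind m (-k) this).2)
  set e : ℝ := (m * (‖b‖ ^ 2 - k ^ 2) - k * (‖c‖ ^ 2 - m ^ 2)) / 2 with he_def
  clear_value e
  have hxd : ∀ x ∈ Qset b k ∩ Qset c m, ⟪x, d⟫ = e := by
    rintro x ⟨hx1, hx2⟩
    simp only [Qset, Set.mem_setOf_eq] at hx1 hx2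
    rw [hd_def, inner_sub_right, real_inner_smul_right, real_inner_smul_right, he_def]
    linear_combination (m / 2) * hx1.symm - (k / 2) * hx2.symm
  set w : V := rot d with hw_def
  clear_value w
  have hw : w ≠ 0 := hw_def ▸ rot_ne_zero hd
  have hwd : ⟪w, d⟫ = 0 := hw_def ▸ rot_inner d
  rcases eq_or_ne e 0 with he | he
  · -- line through origin
    set T : Set ℝ := {t | 2 * k * (|t| * ‖w‖) = 2 * (t * ⟪w, b⟫) - ‖b‖ ^ 2 + k ^ 2} with hT
    have himg : Qset b k ∩ Qset c m ⊆ (fun t : ℝ => t • w) '' T := by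
      rintro x hx
      have hxd0 : ⟪x, d⟫ = 0 := by rw [hxd x hx, he]
      obtain ⟨t, ht⟩ := exists_smul_rot hd hxd0
      rw [← hw_def] at ht
      refine ⟨t, ?_, ht.symm⟩
      obtain ⟨hx1, -⟩ := hx
      simp only [Qset, Set.mem_setOf_eq] at hx1
      rw [ht, norm_smul, Real.norm_eq_abs, real_inner_smul_left] at hx1
      simpa [hT] using hx1
    refine (Set.Finite.image _ ?_).subset himg
    have hTsub : T ⊆ {t : ℝ | t ∈ T ∧ 0 ≤ t} ∪ {t : ℝ | t ∈ T ∧ t < 0} := by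
      intro t ht
      rcases le_or_gt 0 t with h | h
      · exact Or.inl ⟨ht, h⟩
      · exact Or.inr ⟨ht, h⟩
    have hC : k ^ 2 - ‖b‖ ^ 2 ≠ 0 := sub_ne_zero.2 hkb
    refine Set.Finite.subset (Set.Finite.union ?_ ?_) hTsub
    · refine (quad_finite 0 (2 * k * ‖w‖ - 2 * ⟪w, b⟫) (‖b‖ ^ 2 - k ^ 2) ?_).subset ?_
      · rintro ⟨-, -, hC0⟩
        exact hC (by linarith)
      · rintro t ⟨ht, h0t⟩
        simp only [hT, Set.mem_setOf_eq, abs_of_nonneg h0t] at ht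
        simp only [Set.mem_setOf_eq]; nlinarith [ht]
    · refine (quad_finite 0 (-(2 * k * ‖w‖) - 2 * ⟪w, b⟫) (‖b‖ ^ 2 - k ^ 2) ?_).subset ?_
      · rintro ⟨-, -, hC0⟩
        exact hC (by linarith)
      · rintro t ⟨ht, h0t⟩
        simp only [hT, Set.mem_setOf_eq, abs_of_neg h0t] at ht
        simp only [Set.mem_setOf_eq]; nlinarith [ht]
  · -- line not through origin
    have hdn : ‖d‖ ^ 2 ≠ 0 := pow_ne_zero _ (norm_ne_zero_iff.2 hd)
    set p : V := (e / ‖d‖ ^ 2) • d with hp_def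
    clear_value p
    have hpd : ⟪p, d⟫ = e := by
      rw [hp_def, real_inner_smul_left, real_inner_self_eq_norm_sq]
      field_simp
    have h0 : ∀ t : ℝ, p + t • w ≠ 0 := by
      intro t h
      have : ⟪p + t • w, d⟫ = e := by
        rw [inner_add_left, hpd, real_inner_smul_left, hwd]; ring
      rw [h] at this
      simp only [inner_zero_left] at this
      exact he this.symm
    set T : Set ℝ :=
      {t | 2 * k * ‖p + t • w‖ = (2 * ⟪w, b⟫) * t + (2 * ⟪p, b⟫ - ‖b‖ ^ 2 + k ^ 2)} with hT
    have himg : Qset b k ∩ Qset c m ⊆ (fun t : ℝ => p + t • w) '' T := by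
      rintro x hx
      have hxe : ⟪x - p, d⟫ = 0 := by
        rw [inner_sub_left, hxd x hx, hpd]; ring
      obtain ⟨t, ht⟩ := exists_smul_rot hd hxe
      rw [← hw_def] at ht
      have hx_eq : x = p + t • w := by rw [← ht]; abel
      refine ⟨t, ?_, hx_eq.symm⟩
      obtain ⟨hx1, -⟩ := hx
      simp only [Qset, Set.mem_setOf_eq] at hx1
      rw [hx_eq, inner_add_left, real_inner_smul_left] at hx1
      simp only [hT, Set.mem_setOf_eq]
      rw [hx1]; ring
    exact ((line_param_finite p w k _ _ hk0 hw h0).image _).subset himg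

end

lemma key_finite {b c : V} (Hind : ∀ s t : ℝ, s • b + t • c = 0 → s = 0 ∧ t = 0)
    (k m : ℝ) : (Qset b k ∩ Qset c m).Finite := by
  have Hind' : ∀ s t : ℝ, s • c + t • b = 0 → s = 0 ∧ t = 0 := by
    intro s t h
    have := Hind t s (by rw [add_comm]; exact h)
    exact ⟨this.2, this.1⟩
  rcases eq_or_ne (k ^ 2) (‖b‖ ^ 2) with hkb | hkb
  · exact caseA Hind hkb
  rcases eq_or_ne (m ^ 2) (‖c‖ ^ 2) with hmc | hmc
  · rw [Set.inter_comm]; exact caseA Hind' hmc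
  rcases eq_or_ne k 0 with rfl | hk0
  · rcases eq_or_ne m 0 with rfl | hm0
    · -- both zero: intersection of two lines
      refine Set.Subsingleton.finite ?_
      rintro x ⟨hx1, hx2⟩ y ⟨hy1, hy2⟩
      simp only [Qset, Set.mem_setOf_eq] at hx1 hx2 hy1 hy2
      have hxb : ⟪x - y, b⟫ = 0 := by rw [inner_sub_left]; linarith
      have hxc : ⟪x - y, c⟫ = 0 := by rw [inner_sub_left]; linarith
      have := perp_two Hind hxb hxc
      exact sub_eq_zero.1 this
    · rw [Set.inter_comm]; exact caseB2k Hind' hm0 hmc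
  · exact caseB2k Hind hk0 hkb

lemma mem_Qset_of_dist {a p x : V} {k : ℝ} (h : dist x a - dist x p = k) :
    x - a ∈ Qset (p - a) k := by
  have h1 : dist x a = ‖x - a‖ := dist_eq_norm x a
  have h2 : dist x p = ‖(x - a) - (p - a)‖ := by
    rw [sub_sub_sub_cancel_right]; exact dist_eq_norm x p
  rw [h1, h2] at h
  set u : V := x - a
  set B : V := p - a
  have h' : ‖u - B‖ = ‖u‖ - k := by linarith
  have hsq : ‖u - B‖ ^ 2 = (‖u‖ - k) ^ 2 := by rw [h']
  have hexp : ‖u - B‖ ^ 2 = ‖u‖ ^ 2 - 2 * ⟪u, B⟫ + ‖B‖ ^ 2 := norm_sub_sq_real u B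
  simp only [Qset, Set.mem_setOf_eq]
  nlinarith [hsq, hexp]

/-- Erdős: an infinite set of points in the Euclidean
plane with pairwise integer distances is collinear. -/
theorem erdos_infinite_integer_distance_collinear
    (S : Set (EuclideanSpace ℝ (Fin 2))) (hS : S.Infinite)
    (hdist : ∀ p ∈ S, ∀ q ∈ S, ∃ n : ℕ, dist p q = (n : ℝ)) :
    Collinear ℝ S := by
  by_contra hcol
  obtain ⟨a, ha⟩ := hS.nonempty
  obtain ⟨b, hbS, hba⟩ : ∃ b ∈ S, b ≠ a := by
    obtain ⟨b, hb⟩ := (hS.diff (Set.finite_singleton a)).nonempty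
    exact ⟨b, hb.1, by simpa using hb.2⟩
  obtain ⟨c, hcS, hc⟩ : ∃ c ∈ S, ∀ r : ℝ, c ≠ r • (b - a) + a := by
    by_contra hall
    push_neg at hall
    refine hcol ((collinear_iff_of_mem ha).2 ⟨b - a, fun p hp => ?_⟩)
    obtain ⟨r, hr⟩ := hall p hp
    exact ⟨r, by simpa [vadd_eq_add] using hr⟩
  have Hind : ∀ s t : ℝ, s • (b - a) + t • (c - a) = 0 → s = 0 ∧ t = 0 := by
    intro s t h
    rcases eq_or_ne t 0 with rfl | ht0
    · simp only [zero_smul, add_zero] at h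
      rcases smul_eq_zero.1 h with hs | hz
      · exact ⟨hs, rfl⟩
      · exact absurd (sub_eq_zero.1 hz) hba
    · exfalso
      apply hc (-s / t)
      have hca : c - a = (-s / t) • (b - a) := by
        have h2 : t • (c - a) = (-s) • (b - a) := by
          rw [neg_smul]; linear_combination (norm := module) h
        have h3 : t⁻¹ • (t • (c - a)) = t⁻¹ • ((-s) • (b - a)) := by rw [h2]
        rw [smul_smul, smul_smul, inv_mul_cancel₀ ht0, one_smul] at h3
        rw [h3]
        congr 1
        rw [div_eq_inv_mul]
      rw [← hca]
      abel
  -- finitely many integer pairs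
  set g : (EuclideanSpace ℝ (Fin 2)) → ℝ × ℝ :=
    fun x => (dist x a - dist x b, dist x a - dist x c) with hg
  set N : ℤ := ⌈dist a b⌉ with hN
  set M : ℤ := ⌈dist a c⌉ with hM
  set Z : Set (ℝ × ℝ) := (fun p : ℤ × ℤ => ((p.1 : ℝ), (p.2 : ℝ))) ''
    (Set.Icc (-N) N ×ˢ Set.Icc (-M) M) with hZ
  have hZfin : Z.Finite := (((Set.finite_Icc _ _).prod (Set.finite_Icc _ _)).image _)
  have habs : ∀ x ∈ S, ∀ p ∈ S, ∀ nx np : ℕ, dist x a = (nx : ℝ) → dist x p = (np : ℝ) →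
      |((nx : ℤ) - (np : ℤ) : ℤ)| ≤ ⌈dist a p⌉ := by
    intro x hx p hp nx np h1 h2
    have htri : |dist x a - dist x p| ≤ dist a p := by
      rw [dist_comm x a, dist_comm x p]
      exact abs_dist_sub_le a p x
    rw [h1, h2] at htri
    have : |(((nx : ℤ) - (np : ℤ) : ℤ) : ℝ)| ≤ (⌈dist a p⌉ : ℝ) := by
      push_cast
      exact le_trans htri (Int.le_ceil _)
    rw [← Int.cast_abs] at this
    exact_mod_cast this
  have hcover : S ⊆ ⋃ z ∈ Z, {x | g x = z} := by
    intro x hx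
    obtain ⟨na, hna⟩ := hdist x hx a ha
    obtain ⟨nb, hnb⟩ := hdist x hx b hbS
    obtain ⟨nc, hnc⟩ := hdist x hx c hcS
    have hzmem : (((((na : ℤ) - nb : ℤ) : ℝ), ((((na : ℤ) - nc : ℤ)) : ℝ)) : ℝ × ℝ) ∈ Z := by
      refine ⟨((na : ℤ) - nb, (na : ℤ) - nc), ?_, rfl⟩
      constructor
      · exact abs_le.1 (habs x hx b hbS na nb hna hnb)
      · exact abs_le.1 (habs x hx c hcS na nc hna hnc)
    refine Set.mem_biUnion hzmem ?_
    simp only [Set.mem_setOf_eq, hg, Prod.mk.injEq]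
    constructor
    · rw [hna, hnb]; push_cast; ring
    · rw [hna, hnc]; push_cast; ring
  have hfib : ∀ z : ℝ × ℝ, {x : EuclideanSpace ℝ (Fin 2) | g x = z}.Finite := by
    intro z
    refine ((key_finite Hind z.1 z.2).image (fun u => u + a)).subset ?_
    intro x hx
    simp only [Set.mem_setOf_eq, hg, Prod.ext_iff] at hx
    refine ⟨x - a, ⟨mem_Qset_of_dist hx.1, mem_Qset_of_dist hx.2⟩, ?_⟩
    simp
  exact hS ((hZfin.biUnion (fun z _ => hfib z)).subset hcover)
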